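/- General soundness of simplification rule S3: let d be a vertex of a graph G, let D be a proper nonempty subset of the neighbours of d, and let C be the set of vertices outside D ∪ {d} adjacent to some vertex of D. Suppose there is at least one edge with both endpoints in C ∪ D, and every edge with an endpoint in C ∪ D has one endpoint in D and the other in C ∪ D ∪ {d}. Then for any edge e with both endpoints in C ∪ D, there is a maximum induced matching of G that avoids d as an endpoint; moreover the maximum induced matching size of G equals the maximum, over induced matchings M consisting of edges with both endpoints in C ∪ D, of |M| plus the maximum induced matching size of G with {d} ∪ C ∪ D removed. -/
import Mathlib


open SimpleGraph

/-- A set `M` of edges of `G` is an induced matching: all elements are edges of `G`,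
and any two distinct edges of `M` neither share an endpoint nor have adjacent endpoints;
equivalently every vertex of the subgraph induced by the endpoints of `M` has degree 1. -/
def IsInducedMatching {V : Type*} (G : SimpleGraph V) (M : Set (Sym2 V)) : Prop :=
  M ⊆ G.edgeSet ∧
    ∀ e ∈ M, ∀ f ∈ M, e ≠ f → ∀ u ∈ e, ∀ v ∈ f, u ≠ v ∧ ¬ G.Adj u v

/-- The maximum cardinality of an induced matching of `G`. -/
noncomputable def maxIM {V : Type*} (G : SimpleGraph V) : ℕ :=
  sSup {k | ∃ M : Finset (Sym2 V), IsInducedMatching G (↑M) ∧ M.card = k}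

lemma IM_empty {V : Type*} (G : SimpleGraph V) :
    IsInducedMatching G ((∅ : Finset (Sym2 V)) : Set (Sym2 V)) := by
  constructor <;> simp

lemma IM_subset {V : Type*} (G : SimpleGraph V) {M M' : Finset (Sym2 V)} (hss : M' ⊆ M)
    (h : IsInducedMatching G (↑M)) : IsInducedMatching G (↑M') :=
  ⟨fun e he => h.1 (hss he), fun e he f hf hne => h.2 e (hss he) f (hss hf) hne⟩

lemma IM_bddAbove {V : Type*} [Fintype V] (G : SimpleGraph V) :
    BddAbove {k | ∃ M : Finset (Sym2 V), IsInducedMatching G (↑M) ∧ M.card = k} := by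
  classical
  exact ⟨Fintype.card (Sym2 V), by rintro k ⟨M, -, rfl⟩; exact Finset.card_le_univ M⟩

lemma IM_nonempty {V : Type*} (G : SimpleGraph V) :
    {k | ∃ M : Finset (Sym2 V), IsInducedMatching G (↑M) ∧ M.card = k}.Nonempty :=
  ⟨0, ∅, IM_empty G, rfl⟩

lemma le_maxIM {V : Type*} [Fintype V] (G : SimpleGraph V) {M : Finset (Sym2 V)}
    (h : IsInducedMatching G (↑M)) : M.card ≤ maxIM G :=
  le_csSup (IM_bddAbove G) ⟨M, h, rfl⟩

lemma exists_maxIM {V : Type*} [Fintype V] (G : SimpleGraph V) :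
    ∃ M : Finset (Sym2 V), IsInducedMatching G (↑M) ∧ M.card = maxIM G :=
  Nat.sSup_mem (IM_nonempty G) (IM_bddAbove G)

lemma combine {V : Type*} [Fintype V] (G : SimpleGraph V) (d : V) (D C : Set V)
    (hlocal : ∀ u v : V, G.Adj u v → u ∈ C ∪ D →
      ((u ∈ D ∧ v ∈ C ∪ D ∪ {d}) ∨ (v ∈ D ∧ u ∈ C ∪ D ∪ {d})))
    (M₀ : Finset (Sym2 V)) (hM₀ : IsInducedMatching G (↑M₀))
    (hM₀sub : ∀ e ∈ M₀, ∀ x ∈ e, x ∈ C ∪ D) :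
    M₀.card + maxIM (G.induce (insert d (C ∪ D))ᶜ) ≤ maxIM G := by
  classical
  set R : Set V := insert d (C ∪ D) with hR
  obtain ⟨M', hM', hM'card⟩ := exists_maxIM (G.induce Rᶜ)
  set L : Finset (Sym2 V) := M'.image (Sym2.map (Subtype.val : ↥(Rᶜ) → V)) with hL
  have hinj : Function.Injective (Sym2.map (Subtype.val : ↥(Rᶜ) → V)) :=
    Sym2.map.injective Subtype.val_injective
  have hLcard : L.card = M'.card := Finset.card_image_of_injective _ hinj
  have memL : ∀ f ∈ L, ∀ v ∈ f, v ∈ (Rᶜ : Set V) := by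
    intro f hf v hv
    obtain ⟨f', hf', rfl⟩ := Finset.mem_image.mp hf
    obtain ⟨a, ha, rfl⟩ := Sym2.mem_map.mp hv
    exact a.2
  have hCDR : (C ∪ D) ⊆ R := Set.subset_insert _ _
  have hcross : ∀ u ∈ C ∪ D, ∀ v ∈ (Rᶜ : Set V), u ≠ v ∧ ¬ G.Adj u v := by
    intro u hu v hv
    constructor
    · rintro rfl; exact hv (hCDR hu)
    · intro hadj
      rcases hlocal u v hadj hu with ⟨-, h2⟩ | ⟨h1, -⟩
      · rcases h2 with h2 | h2
        · exact hv (hCDR h2)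
        · exact hv (by rw [h2]; exact Set.mem_insert _ _)
      · exact hv (hCDR (Set.mem_union_right _ h1))
  have hdisj : Disjoint M₀ L := by
    rw [Finset.disjoint_left]
    intro e he heL
    induction e using Sym2.ind with
    | _ x y =>
      have hx : x ∈ C ∪ D := hM₀sub _ he x (Sym2.mem_mk_left x y)
      have hx' : x ∈ (Rᶜ : Set V) := memL _ heL x (Sym2.mem_mk_left x y)
      exact hx' (hCDR hx)
  have hadjL : ∀ (a b : ↥(Rᶜ)), (G.induce Rᶜ).Adj a b ↔ G.Adj ↑a ↑b := by
    intro a b; simp [SimpleGraph.induce]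
  have hmatch : IsInducedMatching G ↑(M₀ ∪ L) := by
    constructor
    · intro e he
      rw [Finset.coe_union, Set.mem_union] at he
      rcases he with he | he
      · exact hM₀.1 he
      · obtain ⟨f', hf', rfl⟩ := Finset.mem_image.mp he
        induction f' using Sym2.ind with
        | _ a b =>
          rw [Sym2.map_pair_eq, SimpleGraph.mem_edgeSet]
          exact (hadjL a b).mp ((hM'.1) hf')
    · intro e he f hf hne u hu v hv
      rw [Finset.mem_coe, Finset.mem_union] at he hf
      rcases he with he | he <;> rcases hf with hf | hf
      · exact hM₀.2 e he f hf hne u hu v hv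
      · exact hcross u (hM₀sub e he u hu) v (memL f hf v hv)
      · have := hcross v (hM₀sub f hf v hv) u (memL e he u hu)
        exact ⟨(this.1).symm, fun h => this.2 h.symm⟩
      · obtain ⟨e', he', rfl⟩ := Finset.mem_image.mp he
        obtain ⟨f', hf', rfl⟩ := Finset.mem_image.mp hf
        have hne' : e' ≠ f' := fun h => hne (by rw [h])
        obtain ⟨a, ha, rfl⟩ := Sym2.mem_map.mp hu
        obtain ⟨b, hb, rfl⟩ := Sym2.mem_map.mp hv
        have := hM'.2 e' he' f' hf' hne' a ha b hb
        exact ⟨fun h => this.1 (Subtype.val_injective h),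
          fun h => this.2 ((hadjL a b).mpr h)⟩
  calc M₀.card + maxIM (G.induce Rᶜ) = M₀.card + L.card := by rw [hLcard, hM'card]
    _ = (M₀ ∪ L).card := (Finset.card_union_of_disjoint hdisj).symm
    _ ≤ maxIM G := le_maxIM G hmatch

/-- general soundness of simplification rule S3: let `D` be a proper
nonempty subset of the neighbours of `d` and let `C` be the vertices outside `D ∪ {d}`
adjacent to some vertex of `D`. If there is an edge with both endpoints in `C ∪ D`, and
every edge with an endpoint in `C ∪ D` has one endpoint in `D` and the other in
`C ∪ D ∪ {d}`, then some maximum induced matching of `G` avoids `d` as an endpoint, and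
`maxIM G` is the maximum over induced matchings `M` consisting of edges with both
endpoints in `C ∪ D` of `|M| + maxIM (G − ({d} ∪ C ∪ D))`. -/
theorem stmt_11 {V : Type*} [Fintype V] (G : SimpleGraph V) (d : V) (D C : Set V)
    (hD : D ⊆ G.neighborSet d) (hDne : D.Nonempty) (hDprop : D ≠ G.neighborSet d)
    (hC : C = {v : V | v ∉ D ∧ v ≠ d ∧ ∃ u ∈ D, G.Adj u v})
    (hedge : ∃ u v : V, G.Adj u v ∧ u ∈ C ∪ D ∧ v ∈ C ∪ D)
    (hlocal : ∀ u v : V, G.Adj u v → u ∈ C ∪ D →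
      ((u ∈ D ∧ v ∈ C ∪ D ∪ {d}) ∨ (v ∈ D ∧ u ∈ C ∪ D ∪ {d}))) :
    (∃ M : Finset (Sym2 V), IsInducedMatching G (↑M) ∧ M.card = maxIM G ∧
      ∀ e ∈ M, d ∉ e) ∧
    maxIM G = sSup {k : ℕ | ∃ M : Finset (Sym2 V), IsInducedMatching G (↑M) ∧
      (∀ e ∈ M, ∀ x ∈ e, x ∈ C ∪ D) ∧
      k = M.card + maxIM (G.induce (insert d (C ∪ D))ᶜ)} := by
  classical
  -- Part 1: a maximum induced matching avoiding d
  have part1 : ∃ M : Finset (Sym2 V), IsInducedMatching G (↑M) ∧ M.card = maxIM G ∧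
      ∀ e ∈ M, d ∉ e := by
    obtain ⟨M, hM, hMcard⟩ := exists_maxIM G
    by_cases hd : ∀ e ∈ M, d ∉ e
    · exact ⟨M, hM, hMcard, hd⟩
    · push_neg at hd
      obtain ⟨e, he, hde⟩ := hd
      have hothers : ∀ f ∈ M, f ≠ e → ∀ x ∈ f, x ∉ C ∪ D ∧ x ≠ d := by
        intro f hf hfe x hx
        have hpair := hM.2 e he f hf (Ne.symm hfe)
        have hdx := hpair d hde x hx
        constructor
        · intro hxCD
          obtain ⟨y, rfl⟩ := Sym2.mem_iff_exists.mp hx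
          have hadj : G.Adj x y := (SimpleGraph.mem_edgeSet G).mp (hM.1 hf)
          rcases hlocal x y hadj hxCD with ⟨hxD, -⟩ | ⟨hyD, -⟩
          · exact hdx.2 (hD hxD)
          · exact (hpair d hde y (Sym2.mem_mk_right x y)).2 (hD hyD)
        · exact fun h => hdx.1 h.symm
      obtain ⟨a, b, hab, haCD, hbCD⟩ := hedge
      have hdCD : d ∉ C ∪ D := by
        rintro (hdC | hdD)
        · rw [hC] at hdC; exact hdC.2.1 rfl
        · exact G.irrefl (hD hdD)
      have habne : s(a, b) ∉ M.erase e := by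
        intro h
        exact (hothers _ (Finset.mem_of_mem_erase h) (Finset.ne_of_mem_erase h) a
          (Sym2.mem_mk_left a b)).1 haCD
      refine ⟨insert s(a, b) (M.erase e), ?_, ?_, ?_⟩
      · constructor
        · intro g hg
          rw [Finset.coe_insert, Set.mem_insert_iff] at hg
          rcases hg with rfl | hg
          · exact (SimpleGraph.mem_edgeSet G).mpr hab
          · exact hM.1 (Finset.mem_of_mem_erase hg)
        · have hsep : ∀ g' ∈ M.erase e, ∀ v ∈ g', ∀ u ∈ C ∪ D, u ≠ v ∧ ¬ G.Adj u v := by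
            intro g' hg' v hv u hu
            have hvfacts := hothers _ (Finset.mem_of_mem_erase hg') (Finset.ne_of_mem_erase hg') v hv
            constructor
            · rintro rfl; exact hvfacts.1 hu
            · intro hadj
              rcases hlocal u v hadj hu with ⟨-, h2⟩ | ⟨h1, -⟩
              · rcases h2 with h2 | h2
                · exact hvfacts.1 h2
                · exact hvfacts.2 h2
              · exact hvfacts.1 (Set.mem_union_right _ h1)
          intro g hg g' hg' hne u hu v hv
          rw [Finset.mem_coe, Finset.mem_insert] at hg hg'
          rcases hg with rfl | hg <;> rcases hg' with rfl | hg'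
          · exact absurd rfl hne
          · have huCD : u ∈ C ∪ D := by
              rcases Sym2.mem_iff.mp hu with rfl | rfl
              · exact haCD
              · exact hbCD
            exact hsep g' hg' v hv u huCD
          · have hvCD : v ∈ C ∪ D := by
              rcases Sym2.mem_iff.mp hv with rfl | rfl
              · exact haCD
              · exact hbCD
            have := hsep g hg u hu v hvCD
            exact ⟨(this.1).symm, fun h => this.2 h.symm⟩
          · exact hM.2 g (Finset.mem_of_mem_erase hg) g' (Finset.mem_of_mem_erase hg') hne u hu v hv
      · have h1 : 1 ≤ M.card := Finset.card_pos.mpr ⟨e, he⟩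
        rw [Finset.card_insert_of_notMem habne, Finset.card_erase_of_mem he, ← hMcard]
        omega
      · intro g hg
        rw [Finset.mem_insert] at hg
        rcases hg with rfl | hg
        · intro hdg
          rcases Sym2.mem_iff.mp hdg with rfl | rfl
          · exact hdCD haCD
          · exact hdCD hbCD
        · intro hdg
          exact (hothers _ (Finset.mem_of_mem_erase hg) (Finset.ne_of_mem_erase hg) d hdg).2 rfl
  set R : Set V := insert d (C ∪ D) with hRdef
  set S : Set ℕ := {k : ℕ | ∃ M : Finset (Sym2 V), IsInducedMatching G (↑M) ∧
      (∀ e ∈ M, ∀ x ∈ e, x ∈ C ∪ D) ∧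
      k = M.card + maxIM (G.induce Rᶜ)} with hSdef
  have hSne : S.Nonempty := ⟨maxIM (G.induce Rᶜ), ∅, IM_empty G, by simp, by simp⟩
  have hSle : ∀ k ∈ S, k ≤ maxIM G := by
    rintro k ⟨M₀, hM₀, hsub, rfl⟩
    exact combine G d D C hlocal M₀ hM₀ hsub
  have hSbdd : BddAbove S := ⟨maxIM G, hSle⟩
  obtain ⟨M, hM, hMcard, hMd⟩ := part1
  refine ⟨⟨M, hM, hMcard, hMd⟩, le_antisymm ?_ (csSup_le hSne hSle)⟩
  -- maxIM G ≤ sSup S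
  set P : Sym2 V → Prop := fun e => ∃ x ∈ e, x ∈ C ∪ D with hPdef
  set M₁ : Finset (Sym2 V) := M.filter P with hM₁def
  set M₂ : Finset (Sym2 V) := M.filter (fun e => ¬ P e) with hM₂def
  have hM₁sub : ∀ e ∈ M₁, ∀ x ∈ e, x ∈ C ∪ D := by
    intro e he x hx
    rw [hM₁def, Finset.mem_filter] at he
    obtain ⟨heM, x₀, hx₀e, hx₀CD⟩ := he
    obtain ⟨y, rfl⟩ := Sym2.mem_iff_exists.mp hx₀e
    have hadj : G.Adj x₀ y := (SimpleGraph.mem_edgeSet G).mp (hM.1 heM)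
    have hyCD : y ∈ C ∪ D := by
      rcases hlocal x₀ y hadj hx₀CD with ⟨-, h2⟩ | ⟨h1, -⟩
      · rcases h2 with h2 | h2
        · exact h2
        · exact absurd (h2 ▸ Sym2.mem_mk_right x₀ y : d ∈ s(x₀, y)) (hMd _ heM)
      · exact Set.mem_union_right _ h1
    rcases Sym2.mem_iff.mp hx with rfl | rfl
    · exact hx₀CD
    · exact hyCD
  have hM₁IM : IsInducedMatching G (↑M₁) := IM_subset G (Finset.filter_subset _ _) hM
  have hM₂mem : ∀ e ∈ M₂, ∀ x ∈ e, x ∈ (Rᶜ : Set V) := by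
    intro e he x hx
    rw [hM₂def, Finset.mem_filter] at he
    intro hxR
    rcases hxR with hxd | hxCD
    · exact (hMd _ he.1) (hxd ▸ hx)
    · exact he.2 ⟨x, hx, hxCD⟩
  have hM₂le : M₂.card ≤ maxIM (G.induce Rᶜ) := by
    by_cases hne : (Rᶜ : Set V).Nonempty
    · obtain ⟨z, hz⟩ := hne
      set g : V → ↥(Rᶜ : Set V) := fun x => if h : x ∈ (Rᶜ : Set V) then ⟨x, h⟩ else ⟨z, hz⟩
        with hgdef
      have hgval : ∀ x ∈ (Rᶜ : Set V), ((g x : ↥(Rᶜ : Set V)) : V) = x := by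
        intro x hx
        simp only [hgdef]
        rw [dif_pos hx]
      have hlinv : ∀ e ∈ M₂, Sym2.map (Subtype.val) (Sym2.map g e) = e := by
        intro e he
        induction e using Sym2.ind with
        | _ x y =>
          rw [Sym2.map_pair_eq, Sym2.map_pair_eq,
            hgval x (hM₂mem _ he x (Sym2.mem_mk_left x y)),
            hgval y (hM₂mem _ he y (Sym2.mem_mk_right x y))]
      have hinjOn : Set.InjOn (Sym2.map g) ↑M₂ := by
        intro e he f hf h
        rw [← hlinv e he, ← hlinv f hf, h]
      have hadjL : ∀ (a b : ↥(Rᶜ : Set V)), (G.induce Rᶜ).Adj a b ↔ G.Adj ↑a ↑b := by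
        intro a b; simp [SimpleGraph.induce]
      set M₂' : Finset (Sym2 ↥(Rᶜ : Set V)) := M₂.image (Sym2.map g) with hM₂'def
      have hcard : M₂'.card = M₂.card := Finset.card_image_of_injOn hinjOn
      have hIM : IsInducedMatching (G.induce Rᶜ) (↑M₂') := by
        constructor
        · intro e' he'
          obtain ⟨e, he, rfl⟩ := Finset.mem_image.mp he'
          induction e using Sym2.ind with
          | _ x y =>
            rw [Sym2.map_pair_eq, SimpleGraph.mem_edgeSet, hadjL,
              hgval x (hM₂mem _ he x (Sym2.mem_mk_left x y)),
              hgval y (hM₂mem _ he y (Sym2.mem_mk_right x y))]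
            exact (SimpleGraph.mem_edgeSet G).mp (hM.1 (Finset.filter_subset _ _ he))
        · intro e' he' f' hf' hne' u' hu' v' hv'
          rw [Finset.mem_coe] at he' hf'
          obtain ⟨e, he, rfl⟩ := Finset.mem_image.mp he'
          obtain ⟨f, hf, rfl⟩ := Finset.mem_image.mp hf'
          have hnef : e ≠ f := fun h => hne' (by rw [h])
          obtain ⟨u, hu, rfl⟩ := Sym2.mem_map.mp hu'
          obtain ⟨v, hv, rfl⟩ := Sym2.mem_map.mp hv'
          have huR : u ∈ (Rᶜ : Set V) := hM₂mem _ he u hu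
          have hvR : v ∈ (Rᶜ : Set V) := hM₂mem _ hf v hv
          have := hM.2 e (Finset.filter_subset _ _ he) f (Finset.filter_subset _ _ hf) hnef
            u hu v hv
          constructor
          · intro h
            apply this.1
            have := congrArg (Subtype.val) h
            rwa [hgval u huR, hgval v hvR] at this
          · rw [hadjL, hgval u huR, hgval v hvR]
            exact this.2
      calc M₂.card = M₂'.card := hcard.symm
        _ ≤ maxIM (G.induce Rᶜ) := le_maxIM _ hIM
    · have : M₂ = ∅ := by
        rw [Finset.eq_empty_iff_forall_notMem]
        intro e he
        have hx : ∃ x, x ∈ e := Sym2.ind (fun x y => ⟨x, Sym2.mem_mk_left x y⟩) e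
        obtain ⟨x, hx⟩ := hx
        exact hne ⟨x, hM₂mem _ he x hx⟩
      simp [this]
  have hsplit : M₁.card + M₂.card = M.card :=
    Finset.card_filter_add_card_filter_not P
  have hle : maxIM G ≤ M₁.card + maxIM (G.induce Rᶜ) := by
    rw [← hMcard, ← hsplit]
    exact Nat.add_le_add_left hM₂le _
  exact hle.trans (le_csSup hSbdd ⟨M₁, hM₁IM, hM₁sub, rfl⟩)
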